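/- Let (E, L, B) be a weakly left-resolving labeled space and A ∈ B nonempty. Let H(A) be the smallest hereditary set containing A, and define S(H(A)) := {B ∈ B : there is n ≥ 0 such that r(B, β) ∈ H(A) for all labeled paths β of length n, and r(B, γ) ∈ H(A) ⊕ B_reg for all labeled paths γ (including ε) of length less than n}, where H(A) ⊕ B_reg := {C ∪ D : C ∈ H(A), D ∈ B_reg}. Then S(H(A)) is a hereditary saturated subset of B, and it is the smallest saturated hereditary subset of B containing A. -/

import Mathlib

universe u v

variable {V : Type u} {Λ : Type v}

/-- The relative range `r(S, α)` of a set of vertices along a labeled path. -/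
def relRange (Edge : V → Λ → V → Prop) : Set V → List Λ → Set V
  | S, [] => S
  | S, a :: α => relRange Edge {w | ∃ u ∈ S, Edge u a w} α

/-- The range `r(α)` of a labeled path. -/
def lrange (Edge : V → Λ → V → Prop) (α : List Λ) : Set V :=
  relRange Edge Set.univ α

/-- `α` is a (nonempty) labeled path of the labeled graph. -/
def IsLP (Edge : V → Λ → V → Prop) (α : List Λ) : Prop :=
  α ≠ [] ∧ (lrange Edge α).Nonempty

/-- `L(SE¹)`: labels of edges emitted from `S`. -/
def edgeLabels (Edge : V → Λ → V → Prop) (S : Set V) : Set Λ :=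
  {a | ∃ u ∈ S, ∃ w, Edge u a w}

/-- `S` is regular: every nonempty `B ∈ ℬ` with `B ⊆ S` emits a finite nonzero set of labels. -/
def RegularSet (Edge : V → Λ → V → Prop) (ℬ : Set (Set V)) (S : Set V) : Prop :=
  ∀ B ∈ ℬ, B ⊆ S → B.Nonempty →
    (edgeLabels Edge B).Finite ∧ (edgeLabels Edge B).Nonempty

/-- `H ⊆ ℬ` is hereditary. -/
def Hered (Edge : V → Λ → V → Prop) (ℬ H : Set (Set V)) : Prop :=
  H ⊆ ℬ ∧ (∀ A ∈ H, ∀ α : List Λ, IsLP Edge α → relRange Edge A α ∈ H) ∧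
    (∀ A ∈ H, ∀ B ∈ H, A ∪ B ∈ H) ∧ (∀ A ∈ H, ∀ B ∈ ℬ, B ⊆ A → B ∈ H)

/-- `H` is saturated. -/
def Satur (Edge : V → Λ → V → Prop) (ℬ H : Set (Set V)) : Prop :=
  ∀ A ∈ ℬ, RegularSet Edge ℬ A →
    (∀ α : List Λ, IsLP Edge α → relRange Edge A α ∈ H) → A ∈ H

/-- `H(A)`: sets covered by finitely many relative ranges `r(A, αᵢ)`, `αᵢ ∈ L^#(E)`. -/
def HSet (Edge : V → Λ → V → Prop) (ℬ : Set (Set V)) (A : Set V) : Set (Set V) :=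
  {B ∈ ℬ | ∃ l : List (List Λ), (∀ α ∈ l, α = [] ∨ IsLP Edge α) ∧
    B ⊆ ⋃ α ∈ l, relRange Edge A α}

/-- `S(H(A))`: the saturation of `H(A)`. -/
def SHSet (Edge : V → Λ → V → Prop) (ℬ : Set (Set V)) (A : Set V) : Set (Set V) :=
  {B ∈ ℬ | ∃ n : ℕ,
    (∀ β : List Λ, (β = [] ∨ IsLP Edge β) → β.length = n →
      relRange Edge B β ∈ HSet Edge ℬ A) ∧
    (∀ γ : List Λ, (γ = [] ∨ IsLP Edge γ) → γ.length < n →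
      ∃ C ∈ HSet Edge ℬ A, ∃ D ∈ ℬ, RegularSet Edge ℬ D ∧ relRange Edge B γ = C ∪ D)}

/-- `ℬ` is an accommodating set for the labeled graph. -/
def Accommodating (Edge : V → Λ → V → Prop) (ℬ : Set (Set V)) : Prop :=
  (∀ α : List Λ, IsLP Edge α → lrange Edge α ∈ ℬ) ∧
    (∀ A ∈ ℬ, ∀ α : List Λ, IsLP Edge α → relRange Edge A α ∈ ℬ) ∧
    (∀ A ∈ ℬ, ∀ B ∈ ℬ, A ∪ B ∈ ℬ) ∧ (∀ A ∈ ℬ, ∀ B ∈ ℬ, A ∩ B ∈ ℬ)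

/-- `ℬ` is non-degenerate: closed under relative complements (and contains `∅`). -/
def NonDegenerate (ℬ : Set (Set V)) : Prop :=
  (∅ : Set V) ∈ ℬ ∧ ∀ A ∈ ℬ, ∀ B ∈ ℬ, A \ B ∈ ℬ

/-- The labeled space is weakly left-resolving. -/
def WLR (Edge : V → Λ → V → Prop) (ℬ : Set (Set V)) : Prop :=
  ∀ A ∈ ℬ, ∀ B ∈ ℬ, ∀ α : List Λ, IsLP Edge α →
    relRange Edge (A ∩ B) α = relRange Edge A α ∩ relRange Edge B α

/-- `ℬ` is the smallest non-degenerate accommodating set. -/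
def SmallestAccom (Edge : V → Λ → V → Prop) (ℬ : Set (Set V)) : Prop :=
  Accommodating Edge ℬ ∧ NonDegenerate ℬ ∧
    ∀ ℬ' : Set (Set V), Accommodating Edge ℬ' → NonDegenerate ℬ' → ℬ ⊆ ℬ'

/-- `x_{[1,n]}`: the length-`n` prefix of an infinite word. -/
def wordPrefix (x : ℕ → Λ) (n : ℕ) : List Λ := List.ofFn fun i : Fin n => x i.val

/-- `x` lies in the closure of `L(E^∞)`: all finite prefixes are labeled paths. -/
def InfWord (Edge : V → Λ → V → Prop) (x : ℕ → Λ) : Prop :=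
  ∀ n : ℕ, 1 ≤ n → IsLP Edge (wordPrefix x n)

/-- Strong cofinality of a labeled space. -/
def StrCofinal (Edge : V → Λ → V → Prop) (ℬ : Set (Set V)) : Prop :=
  ∀ A ∈ ℬ, A.Nonempty → ∀ x : ℕ → Λ, InfWord Edge x →
    ∃ N : ℕ, 1 ≤ N ∧ ∃ l : List (List Λ), (∀ α ∈ l, IsLP Edge α) ∧
      lrange Edge (wordPrefix x N) ⊆ ⋃ α ∈ l, relRange Edge A α

/-- Minimality: the only hereditary saturated subsets of `ℬ` are `{∅}` and `ℬ`. -/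
def MinimalLS (Edge : V → Λ → V → Prop) (ℬ : Set (Set V)) : Prop :=
  ∀ H : Set (Set V), Hered Edge ℬ H → Satur Edge ℬ H → H ⊆ {∅} ∨ H = ℬ

/-- `L(SEⁿ)`: labels of paths of length `n` with source in `S`. -/
def labelsOfLen (Edge : V → Λ → V → Prop) (S : Set V) (n : ℕ) : Set (List Λ) :=
  {β | β.length = n ∧ (relRange Edge S β).Nonempty}

/-- The labeled space is disagreeable. -/
def Disagreeable (Edge : V → Λ → V → Prop) (ℬ : Set (Set V)) : Prop :=
  ∀ A ∈ ℬ, A.Nonempty → ∀ β : List Λ, IsLP Edge β →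
    ∃ n : ℕ, 1 ≤ n ∧ labelsOfLen Edge A (β.length * n) ≠ {(List.replicate n β).flatten}

/-- `(α, A)` is a cycle. -/
def IsCycle (Edge : V → Λ → V → Prop) (ℬ : Set (Set V)) (α : List Λ) (A : Set V) : Prop :=
  IsLP Edge α ∧ A ∈ ℬ ∧ A.Nonempty ∧ ∀ B ∈ ℬ, B ⊆ A → relRange Edge B α = B

/-- The cycle `(α, A)` has an exit. -/
def CycleHasExit (Edge : V → Λ → V → Prop) (ℬ : Set (Set V)) (α : List Λ) (A : Set V) : Prop :=
  ∃ t : ℕ, 1 ≤ t ∧ t ≤ α.length ∧ ∃ B ∈ ℬ, B.Nonempty ∧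
    B ⊆ relRange Edge A (α.take t) ∧
    edgeLabels Edge B ≠ {a : Λ | α[t % α.length]? = some a}

/-- The cycle `(α, A)` has no exits. -/
def CycleNoExit (Edge : V → Λ → V → Prop) (ℬ : Set (Set V)) (α : List Λ) (A : Set V) : Prop :=
  ∀ t : ℕ, 1 ≤ t → t ≤ α.length → ∀ B ∈ ℬ, B.Nonempty →
    B ⊆ relRange Edge A (α.take t) →
    RegularSet Edge ℬ B ∧ edgeLabels Edge B = {a : Λ | α[t % α.length]? = some a}

/-- Condition (L): every cycle has an exit. -/
def CondL (Edge : V → Λ → V → Prop) (ℬ : Set (Set V)) : Prop :=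
  ∀ (α : List Λ) (A : Set V), IsCycle Edge ℬ α A → CycleHasExit Edge ℬ α A

/-- `α` is a loop at `A`. -/
def IsLoop (Edge : V → Λ → V → Prop) (α : List Λ) (A : Set V) : Prop :=
  IsLP Edge α ∧ A ⊆ relRange Edge A α

/-- The loop `(α, A)` has an exit. -/
def LoopHasExit (Edge : V → Λ → V → Prop) (α : List Λ) (A : Set V) : Prop :=
  {β : List Λ | ∃ k : ℕ, 1 ≤ k ∧ k ≤ α.length ∧ β = α.take k} ⊂
      {β : List Λ | 1 ≤ β.length ∧ β.length ≤ α.length ∧ (relRange Edge A β).Nonempty} ∨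
    A ⊂ relRange Edge A α

/-- `β` is an irreducible path: not a repetition of a proper initial path. -/
def IrreduciblePath (β : List Λ) : Prop :=
  ∀ k : ℕ, 1 ≤ k → k < β.length → ∀ m : ℕ, β ≠ (List.replicate m (β.take k)).flatten

/-- The generalized vertex `[v]_l`. -/
def gvClass (Edge : V → Λ → V → Prop) (l : ℕ) (v : V) : Set V :=
  {w | ∀ β : List Λ, 1 ≤ β.length → β.length ≤ l → (v ∈ lrange Edge β ↔ w ∈ lrange Edge β)}

/-- `s(x)`: sources of infinite paths labeled by `x`. -/
def srcInf (Edge : V → Λ → V → Prop) (x : ℕ → Λ) : Set V :=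
  {w | ∃ p : ℕ → V, p 0 = w ∧ ∀ n : ℕ, Edge (p n) (x n) (p (n + 1))}

section Aux
variable {Edge : V → Λ → V → Prop} {ℬ : Set (Set V)}

theorem relRange_append (S : Set V) (α β : List Λ) :
    relRange Edge S (α ++ β) = relRange Edge (relRange Edge S α) β := by
  induction α generalizing S with
  | nil => rfl
  | cons a α ih => simp only [List.cons_append, relRange]; exact ih _

theorem relRange_mono {S T : Set V} (h : S ⊆ T) (γ : List Λ) :
    relRange Edge S γ ⊆ relRange Edge T γ := by
  induction γ generalizing S T with
  | nil => exact h
  | cons a γ ih =>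
    exact ih fun w ⟨u, hu, he⟩ => ⟨u, h hu, he⟩

theorem relRange_empty (γ : List Λ) : relRange Edge (∅ : Set V) γ = ∅ := by
  induction γ with
  | nil => rfl
  | cons a γ ih =>
    simp only [relRange]
    convert ih using 2
    simp

theorem relRange_union (S T : Set V) (γ : List Λ) :
    relRange Edge (S ∪ T) γ = relRange Edge S γ ∪ relRange Edge T γ := by
  induction γ generalizing S T with
  | nil => rfl
  | cons a γ ih =>
    have h : {w | ∃ u ∈ S ∪ T, Edge u a w} =
        {w | ∃ u ∈ S, Edge u a w} ∪ {w | ∃ u ∈ T, Edge u a w} := by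
      ext w
      constructor
      · rintro ⟨u, hu | hu, he⟩
        · exact Or.inl ⟨u, hu, he⟩
        · exact Or.inr ⟨u, hu, he⟩
      · rintro (⟨u, hu, he⟩ | ⟨u, hu, he⟩)
        · exact ⟨u, Or.inl hu, he⟩
        · exact ⟨u, Or.inr hu, he⟩
    simp only [relRange, h, ih]

theorem relRange_subset_lrange (S : Set V) (γ : List Λ) :
    relRange Edge S γ ⊆ lrange Edge γ :=
  relRange_mono (Set.subset_univ S) γ

theorem nonempty_of_relRange {S : Set V} {γ : List Λ}
    (h : (relRange Edge S γ).Nonempty) : S.Nonempty := by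
  induction γ generalizing S with
  | nil => exact h
  | cons a γ ih =>
    obtain ⟨w, u, hu, _⟩ := ih h
    exact ⟨u, hu⟩

theorem isLP_append {α β : List Λ} (h : IsLP Edge (α ++ β)) :
    (α = [] ∨ IsLP Edge α) ∧ (β = [] ∨ IsLP Edge β) := by
  obtain ⟨hne, hr⟩ := h
  rw [lrange, relRange_append] at hr
  constructor
  · rcases Classical.em (α = []) with h | h
    · exact Or.inl h
    · exact Or.inr ⟨h, nonempty_of_relRange hr⟩
  · rcases Classical.em (β = []) with h | h
    · exact Or.inl h
    · exact Or.inr ⟨h, hr.mono (relRange_subset_lrange _ β)⟩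

end Aux
section Aux2
variable {Edge : V → Λ → V → Prop} {ℬ : Set (Set V)}

theorem relRange_mem_B (hacc : Accommodating Edge ℬ) {S : Set V} (hS : S ∈ ℬ)
    {γ : List Λ} (hγ : γ = [] ∨ IsLP Edge γ) : relRange Edge S γ ∈ ℬ := by
  rcases hγ with rfl | h
  · exact hS
  · exact hacc.2.1 S hS γ h

theorem relRange_biUnion (f : List Λ → Set V) (l : List (List Λ)) (γ : List Λ) :
    relRange Edge (⋃ α ∈ l, f α) γ = ⋃ α ∈ l, relRange Edge (f α) γ := by
  induction l with
  | nil => simp [relRange_empty]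
  | cons b l ih =>
    have h : (⋃ α ∈ b :: l, f α) = f b ∪ ⋃ α ∈ l, f α := by
      simp [List.mem_cons, Set.iUnion_or, Set.iUnion_union_distrib]
    have h2 : (⋃ α ∈ b :: l, relRange Edge (f α) γ) =
        relRange Edge (f b) γ ∪ ⋃ α ∈ l, relRange Edge (f α) γ := by
      simp [List.mem_cons, Set.iUnion_or, Set.iUnion_union_distrib]
    rw [h, h2, relRange_union, ih]

theorem empty_mem_HSet (hnd : NonDegenerate ℬ) (A : Set V) :
    (∅ : Set V) ∈ HSet Edge ℬ A :=
  ⟨hnd.1, [], by simp, by simp⟩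

theorem mem_HSet_of_cover {A B : Set V} (hB : B ∈ ℬ) (l : List (List Λ))
    (hcov : B ⊆ ⋃ α ∈ l, relRange Edge A α) : B ∈ HSet Edge ℬ A := by
  classical
  refine ⟨hB, l.map fun α => if IsLP Edge α then α else [], ?_, ?_⟩
  · intro α hα
    simp only [List.mem_map] at hα
    obtain ⟨δ, _, rfl⟩ := hα
    split
    · exact Or.inr ‹_›
    · exact Or.inl rfl
  · refine hcov.trans ?_
    intro x hx
    simp only [Set.mem_iUnion, List.mem_map, exists_prop, exists_exists_and_eq_and] at hx ⊢
    obtain ⟨δ, hδ, hxδ⟩ := hx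
    by_cases h : IsLP Edge δ
    · exact ⟨δ, hδ, by rw [if_pos h]; exact hxδ⟩
    · by_cases hd : δ = []
      · exact ⟨δ, hδ, by rw [if_neg h]; exact hd ▸ hxδ⟩
      · exfalso
        have hlr : lrange Edge δ = ∅ := by
          by_contra hne
          exact h ⟨hd, Set.nonempty_iff_ne_empty.mpr hne⟩
        have := relRange_subset_lrange A δ hxδ
        rw [hlr] at this
        exact this

theorem HSet_relRange (hacc : Accommodating Edge ℬ) {A B : Set V} {γ : List Λ}
    (hB : B ∈ HSet Edge ℬ A) (hγ : γ = [] ∨ IsLP Edge γ) :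
    relRange Edge B γ ∈ HSet Edge ℬ A := by
  obtain ⟨hBℬ, l, hl, hcov⟩ := hB
  refine mem_HSet_of_cover (relRange_mem_B hacc hBℬ hγ) (l.map (· ++ γ)) ?_
  have hm := relRange_mono (Edge := Edge) hcov γ
  rw [relRange_biUnion] at hm
  refine hm.trans ?_
  intro x hx
  simp only [Set.mem_iUnion, List.mem_map, exists_prop, exists_exists_and_eq_and] at hx ⊢
  obtain ⟨δ, hδ, hxδ⟩ := hx
  exact ⟨δ, hδ, by rwa [relRange_append]⟩

theorem HSet_union (hacc : Accommodating Edge ℬ) {A B₁ B₂ : Set V}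
    (h1 : B₁ ∈ HSet Edge ℬ A) (h2 : B₂ ∈ HSet Edge ℬ A) :
    B₁ ∪ B₂ ∈ HSet Edge ℬ A := by
  obtain ⟨hB1, l1, hl1, hc1⟩ := h1
  obtain ⟨hB2, l2, hl2, hc2⟩ := h2
  refine mem_HSet_of_cover (hacc.2.2.1 _ hB1 _ hB2) (l1 ++ l2) ?_
  intro x hx
  rcases hx with hx | hx
  · have hh := hc1 hx
    simp only [Set.mem_iUnion, exists_prop] at hh ⊢
    obtain ⟨δ, hδ, hxδ⟩ := hh
    exact ⟨δ, List.mem_append.mpr (Or.inl hδ), hxδ⟩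
  · have hh := hc2 hx
    simp only [Set.mem_iUnion, exists_prop] at hh ⊢
    obtain ⟨δ, hδ, hxδ⟩ := hh
    exact ⟨δ, List.mem_append.mpr (Or.inr hδ), hxδ⟩

theorem HSet_subset {A B C : Set V} (hC : C ∈ ℬ) (hB : B ∈ HSet Edge ℬ A)
    (h : C ⊆ B) : C ∈ HSet Edge ℬ A := by
  obtain ⟨_, l, hl, hcov⟩ := hB
  exact ⟨hC, l, hl, h.trans hcov⟩

theorem self_mem_HSet {A : Set V} (hA : A ∈ ℬ) : A ∈ HSet Edge ℬ A :=
  ⟨hA, [[]], by simp, by simp [relRange]⟩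

theorem edgeLabels_empty : edgeLabels Edge (∅ : Set V) = ∅ := by
  ext a
  simp [edgeLabels]

theorem regular_empty : RegularSet Edge ℬ (∅ : Set V) := by
  intro B _ hB hne
  rw [Set.subset_empty_iff] at hB
  exact absurd hne (by rw [hB]; exact Set.not_nonempty_empty)

theorem regular_subset {S T : Set V} (h : RegularSet Edge ℬ T) (hst : S ⊆ T) :
    RegularSet Edge ℬ S :=
  fun B hB hBS hne => h B hB (hBS.trans hst) hne

theorem edgeLabels_union (S T : Set V) :
    edgeLabels Edge (S ∪ T) = edgeLabels Edge S ∪ edgeLabels Edge T := by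
  ext a
  constructor
  · rintro ⟨u, hu | hu, w, he⟩
    · exact Or.inl ⟨u, hu, w, he⟩
    · exact Or.inr ⟨u, hu, w, he⟩
  · rintro (⟨u, hu, w, he⟩ | ⟨u, hu, w, he⟩)
    · exact ⟨u, Or.inl hu, w, he⟩
    · exact ⟨u, Or.inr hu, w, he⟩

theorem regular_union (hacc : Accommodating Edge ℬ) (hnd : NonDegenerate ℬ)
    {S T : Set V} (hS : S ∈ ℬ) (hT : T ∈ ℬ)
    (h1 : RegularSet Edge ℬ S) (h2 : RegularSet Edge ℬ T) :
    RegularSet Edge ℬ (S ∪ T) := by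
  intro B hB hBsub hBne
  have hB1 : B ∩ S ∈ ℬ := hacc.2.2.2 B hB S hS
  have hB2 : B \ S ∈ ℬ := hnd.2 B hB S hS
  have hsub2 : B \ S ⊆ T := fun x hx => (hBsub hx.1).resolve_left hx.2
  have hsplit : B = (B ∩ S) ∪ (B \ S) := (Set.inter_union_diff B S).symm
  have hf1 : (edgeLabels Edge (B ∩ S)).Finite ∧
      ((B ∩ S).Nonempty → (edgeLabels Edge (B ∩ S)).Nonempty) := by
    rcases Set.eq_empty_or_nonempty (B ∩ S) with h | h
    · rw [h]
      rw [edgeLabels_empty]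
      exact ⟨Set.finite_empty, fun hn => absurd hn Set.not_nonempty_empty⟩
    · exact ⟨(h1 _ hB1 Set.inter_subset_right h).1,
        fun _ => (h1 _ hB1 Set.inter_subset_right h).2⟩
  have hf2 : (edgeLabels Edge (B \ S)).Finite ∧
      ((B \ S).Nonempty → (edgeLabels Edge (B \ S)).Nonempty) := by
    rcases Set.eq_empty_or_nonempty (B \ S) with h | h
    · rw [h]
      rw [edgeLabels_empty]
      exact ⟨Set.finite_empty, fun hn => absurd hn Set.not_nonempty_empty⟩
    · exact ⟨(h2 _ hB2 hsub2 h).1, fun _ => (h2 _ hB2 hsub2 h).2⟩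
  constructor
  · rw [hsplit, edgeLabels_union]
    exact hf1.1.union hf2.1
  · rw [hsplit, edgeLabels_union]
    obtain ⟨x, hx⟩ := hBne
    by_cases hxS : x ∈ S
    · exact (hf1.2 ⟨x, hx, hxS⟩).mono Set.subset_union_left
    · exact (hf2.2 ⟨x, hx, hxS⟩).mono Set.subset_union_right

end Aux2
section Aux3
variable {Edge : V → Λ → V → Prop} {ℬ : Set (Set V)}

/-- Auxiliary: the witness predicate inside `SHSet`. -/
def Wit (Edge : V → Λ → V → Prop) (ℬ : Set (Set V)) (A : Set V) (n : ℕ) (B : Set V) : Prop :=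
  (∀ β : List Λ, (β = [] ∨ IsLP Edge β) → β.length = n →
      relRange Edge B β ∈ HSet Edge ℬ A) ∧
    (∀ γ : List Λ, (γ = [] ∨ IsLP Edge γ) → γ.length < n →
      ∃ C ∈ HSet Edge ℬ A, ∃ D ∈ ℬ, RegularSet Edge ℬ D ∧ relRange Edge B γ = C ∪ D)

theorem mem_SHSet_iff {A B : Set V} :
    B ∈ SHSet Edge ℬ A ↔ B ∈ ℬ ∧ ∃ n, Wit Edge ℬ A n B := Iff.rfl

theorem Wit_ge (hacc : Accommodating Edge ℬ) {A B : Set V} {n : ℕ}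
    (hw : Wit Edge ℬ A n B) {β : List Λ} (hβ : β = [] ∨ IsLP Edge β)
    (hlen : n ≤ β.length) : relRange Edge B β ∈ HSet Edge ℬ A := by
  have hsplit : β = β.take n ++ β.drop n := (List.take_append_drop n β).symm
  rcases hβ with rfl | hβ
  · simp only [List.length_nil, Nat.le_zero] at hlen
    subst hlen
    exact hw.1 [] (Or.inl rfl) rfl
  · obtain ⟨h1, h2⟩ := isLP_append (hsplit ▸ hβ)
    have htl : (β.take n).length = n := by
      rw [List.length_take]
      omega
    have hmem : relRange Edge B (β.take n) ∈ HSet Edge ℬ A := hw.1 _ h1 htl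
    have : relRange Edge B β = relRange Edge (relRange Edge B (β.take n)) (β.drop n) := by
      conv_lhs => rw [hsplit]
      rw [relRange_append]
    rw [this]
    exact HSet_relRange hacc hmem h2

theorem Wit_mono (hacc : Accommodating Edge ℬ) (hnd : NonDegenerate ℬ)
    {A B : Set V} {n m : ℕ} (hw : Wit Edge ℬ A n B) (hnm : n ≤ m) :
    Wit Edge ℬ A m B := by
  constructor
  · intro β hβ hlen
    exact Wit_ge hacc hw hβ (by omega)
  · intro γ hγ hlt
    by_cases h : γ.length < n
    · exact hw.2 γ hγ h
    · exact ⟨relRange Edge B γ, Wit_ge hacc hw hγ (by omega), ∅, hnd.1, regular_empty,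
        by simp⟩

theorem Wit_relRange (hacc : Accommodating Edge ℬ) (hnd : NonDegenerate ℬ)
    {A B : Set V} {n : ℕ} {α : List Λ} (hw : Wit Edge ℬ A n B)
    (hα : α = [] ∨ IsLP Edge α) :
    Wit Edge ℬ A (n - α.length) (relRange Edge B α) := by
  constructor
  · intro β hβ hlen
    rw [← relRange_append]
    rcases Set.eq_empty_or_nonempty (lrange Edge (α ++ β)) with hlr | hlr
    · have he : relRange Edge B (α ++ β) = ∅ :=
        Set.subset_empty_iff.mp (hlr ▸ relRange_subset_lrange B (α ++ β))
      rw [he]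
      exact empty_mem_HSet hnd A
    · have hab : α ++ β = [] ∨ IsLP Edge (α ++ β) := by
        rcases Classical.em (α ++ β = []) with h | h
        · exact Or.inl h
        · exact Or.inr ⟨h, hlr⟩
      exact Wit_ge hacc hw hab (by simp only [List.length_append]; omega)
  · intro γ hγ hlt
    rw [← relRange_append]
    rcases Set.eq_empty_or_nonempty (lrange Edge (α ++ γ)) with hlr | hlr
    · have he : relRange Edge B (α ++ γ) = ∅ :=
        Set.subset_empty_iff.mp (hlr ▸ relRange_subset_lrange B (α ++ γ))
      exact ⟨∅, empty_mem_HSet hnd A, ∅, hnd.1, regular_empty, by rw [he]; simp⟩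
    · have hab : α ++ γ = [] ∨ IsLP Edge (α ++ γ) := by
        rcases Classical.em (α ++ γ = []) with h | h
        · exact Or.inl h
        · exact Or.inr ⟨h, hlr⟩
      have hlen : α.length ≤ n := by
        by_contra h
        omega
      exact hw.2 (α ++ γ) hab (by simp only [List.length_append]; omega)

theorem HSet_subset_SHSet {A B : Set V} (hB : B ∈ HSet Edge ℬ A) :
    B ∈ SHSet Edge ℬ A := by
  refine ⟨hB.1, 0, ?_, ?_⟩
  · intro β hβ hlen
    rw [List.length_eq_zero_iff] at hlen
    subst hlen
    exact hB
  · intro γ _ hlt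
    omega

end Aux3
/-- `S(H(A))` is the smallest hereditary saturated subset of `ℬ`
containing `A`. -/
theorem SHSet_smallest_saturated_hereditary (Edge : V → Λ → V → Prop) (ℬ : Set (Set V))
    (hacc : Accommodating Edge ℬ) (hnd : NonDegenerate ℬ) (hwlr : WLR Edge ℬ)
    (A : Set V) (hA : A ∈ ℬ) (hAne : A.Nonempty) :
    Hered Edge ℬ (SHSet Edge ℬ A) ∧ Satur Edge ℬ (SHSet Edge ℬ A) ∧
      A ∈ SHSet Edge ℬ A ∧
      ∀ H : Set (Set V), Hered Edge ℬ H → Satur Edge ℬ H → A ∈ H →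
        SHSet Edge ℬ A ⊆ H := by
  classical
  refine ⟨⟨fun B hB => hB.1, ?_, ?_, ?_⟩, ?_, ?_, ?_⟩
  · -- relRange-closed
    rintro B ⟨hBℬ, n, hw⟩ α hα
    exact ⟨relRange_mem_B hacc hBℬ (Or.inr hα), n - α.length,
      Wit_relRange hacc hnd hw (Or.inr hα)⟩
  · -- union-closed
    rintro B₁ ⟨hB1, n₁, hw1⟩ B₂ ⟨hB2, n₂, hw2⟩
    refine ⟨hacc.2.2.1 _ hB1 _ hB2, max n₁ n₂, ?_, ?_⟩
    · intro β hβ hlen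
      rw [relRange_union]
      exact HSet_union hacc
        (Wit_ge hacc (Wit_mono hacc hnd hw1 (le_max_left n₁ n₂)) hβ (by omega))
        (Wit_ge hacc (Wit_mono hacc hnd hw2 (le_max_right n₁ n₂)) hβ (by omega))
    · intro γ hγ hlt
      obtain ⟨C₁, hC1, D₁, hD1, hr1, he1⟩ :=
        (Wit_mono hacc hnd hw1 (le_max_left n₁ n₂)).2 γ hγ hlt
      obtain ⟨C₂, hC2, D₂, hD2, hr2, he2⟩ :=
        (Wit_mono hacc hnd hw2 (le_max_right n₁ n₂)).2 γ hγ hlt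
      refine ⟨C₁ ∪ C₂, HSet_union hacc hC1 hC2, D₁ ∪ D₂, hacc.2.2.1 _ hD1 _ hD2,
        regular_union hacc hnd hD1 hD2 hr1 hr2, ?_⟩
      rw [relRange_union, he1, he2]
      ext x
      simp only [Set.mem_union]
      tauto
  · -- subset-closed
    rintro B ⟨hBℬ, n, hw⟩ C hCℬ hCB
    refine ⟨hCℬ, n, ?_, ?_⟩
    · intro β hβ hlen
      exact HSet_subset (relRange_mem_B hacc hCℬ hβ) (hw.1 β hβ hlen)
        (relRange_mono hCB β)
    · intro γ hγ hlt
      obtain ⟨C', hC', D, hD, hr, he⟩ := hw.2 γ hγ hlt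
      have hCγ : relRange Edge C γ ∈ ℬ := relRange_mem_B hacc hCℬ hγ
      refine ⟨relRange Edge C γ ∩ C',
        HSet_subset (hacc.2.2.2 _ hCγ _ hC'.1) hC' Set.inter_subset_right,
        relRange Edge C γ ∩ D, hacc.2.2.2 _ hCγ _ hD,
        regular_subset hr Set.inter_subset_right, ?_⟩
      ext x
      simp only [Set.mem_union, Set.mem_inter_iff]
      constructor
      · intro hx
        have hx' : x ∈ C' ∪ D := he ▸ relRange_mono hCB γ hx
        rcases hx' with h | h
        · exact Or.inl ⟨hx, h⟩
        · exact Or.inr ⟨hx, h⟩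
      · rintro (⟨hx, _⟩ | ⟨hx, _⟩) <;> exact hx
  · -- saturated
    intro C hCℬ hreg hsat
    rcases Set.eq_empty_or_nonempty C with rfl | hCne
    · exact HSet_subset_SHSet (empty_mem_HSet hnd A)
    have hlab := hreg C hCℬ (subset_refl C) hCne
    -- for each label a in edgeLabels C, [a] is a labeled path
    have hLP : ∀ a ∈ edgeLabels Edge C, IsLP Edge [a] := by
      rintro a ⟨u, hu, w, he⟩
      exact ⟨by simp, ⟨w, u, trivial, he⟩⟩
    set f : Λ → ℕ := fun a =>
      if h : IsLP Edge [a] then (hsat [a] h).2.choose else 0 with hf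
    have hfspec : ∀ a, (h : IsLP Edge [a]) →
        Wit Edge ℬ A (f a) (relRange Edge C [a]) := by
      intro a h
      rw [hf]
      simp only [dif_pos h]
      exact (hsat [a] h).2.choose_spec
    set m : ℕ := hlab.1.toFinset.sup f with hm
    have hwa : ∀ a ∈ edgeLabels Edge C, Wit Edge ℬ A m (relRange Edge C [a]) := by
      intro a ha
      refine Wit_mono hacc hnd (hfspec a (hLP a ha)) ?_
      exact Finset.le_sup (hlab.1.mem_toFinset.mpr ha)
    have hempty : ∀ a, a ∉ edgeLabels Edge C → relRange Edge C [a] = ∅ := by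
      intro a ha
      ext w
      simp only [Set.mem_empty_iff_false, iff_false]
      rintro ⟨u, hu, he⟩
      exact ha ⟨u, hu, w, he⟩
    refine ⟨hCℬ, m + 1, ?_, ?_⟩
    · intro β hβ hlen
      cases β with
      | nil => simp at hlen
      | cons a β' =>
        have hβLP : IsLP Edge (a :: β') := hβ.resolve_left (by simp)
        have heq : relRange Edge C (a :: β') =
            relRange Edge (relRange Edge C [a]) β' :=
          relRange_append (Edge := Edge) C [a] β'
        by_cases ha : a ∈ edgeLabels Edge C
        · have hβ' : β' = [] ∨ IsLP Edge β' := (isLP_append (α := [a]) hβLP).2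
          rw [heq]
          exact (hwa a ha).1 β' hβ' (by simpa using hlen)
        · rw [heq, hempty a ha, relRange_empty]
          exact empty_mem_HSet hnd A
    · intro γ hγ hlt
      cases γ with
      | nil =>
        exact ⟨∅, empty_mem_HSet hnd A, C, hCℬ, hreg, by simp [relRange]⟩
      | cons a γ' =>
        have hγLP : IsLP Edge (a :: γ') := hγ.resolve_left (by simp)
        have heq : relRange Edge C (a :: γ') =
            relRange Edge (relRange Edge C [a]) γ' :=
          relRange_append (Edge := Edge) C [a] γ'
        by_cases ha : a ∈ edgeLabels Edge C
        · have hγ' : γ' = [] ∨ IsLP Edge γ' := (isLP_append (α := [a]) hγLP).2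
          obtain ⟨C', hC', D, hD, hr, he⟩ :=
            (hwa a ha).2 γ' hγ' (by simp at hlt; omega)
          exact ⟨C', hC', D, hD, hr, by rw [heq, he]⟩
        · exact ⟨∅, empty_mem_HSet hnd A, ∅, hnd.1, regular_empty,
            by rw [heq, hempty a ha, relRange_empty]; simp⟩
  · -- A ∈ SHSet
    exact HSet_subset_SHSet (self_mem_HSet hA)
  · -- minimality
    rintro H hH hS hAH B ⟨hBℬ, n, hw⟩
    have hHsub : ∀ B' ∈ HSet Edge ℬ A, B' ∈ H := by
      rintro B' ⟨hB'ℬ, l, hl, hcov⟩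
      have hUnion : ∀ l' : List (List Λ), (∀ α ∈ l', α = [] ∨ IsLP Edge α) →
          ((⋃ α ∈ l', relRange Edge A α) ∪ A) ∈ H := by
        intro l'
        induction l' with
        | nil => intro _; simpa using hAH
        | cons b t ih =>
          intro hl'
          have hb : relRange Edge A b ∈ H := by
            rcases hl' b List.mem_cons_self with rfl | hb
            · exact hAH
            · exact hH.2.1 A hAH b hb
          have h1 : (⋃ α ∈ b :: t, relRange Edge A α) ∪ A =
              relRange Edge A b ∪ ((⋃ α ∈ t, relRange Edge A α) ∪ A) := by
            simp [List.mem_cons, Set.iUnion_or, Set.iUnion_union_distrib,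
              Set.union_assoc]
          rw [h1]
          exact hH.2.2.1 _ hb _ (ih fun α hα => hl' α (List.mem_cons_of_mem _ hα))
      exact hH.2.2.2 _ (hUnion l hl) B' hB'ℬ
        (hcov.trans Set.subset_union_left)
    have main : ∀ k : ℕ, ∀ B' ∈ ℬ, Wit Edge ℬ A k B' → B' ∈ H := by
      intro k
      induction k with
      | zero =>
        intro B' hB'ℬ hw'
        exact hHsub B' (hw'.1 [] (Or.inl rfl) rfl)
      | succ p ih =>
        intro B' hB'ℬ hw'
        obtain ⟨C, hCH, D, hDℬ, hDreg, hBeq⟩ := hw'.2 [] (Or.inl rfl) (Nat.succ_pos p)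
        have hBeq' : B' = C ∪ D := hBeq
        have hD : D ∈ H := by
          apply hS D hDℬ hDreg
          intro α hα
          have hlenα : 1 ≤ α.length := by
            cases α with
            | nil => exact absurd rfl hα.1
            | cons => simp
          have hwα : Wit Edge ℬ A p (relRange Edge B' α) :=
            Wit_mono hacc hnd (Wit_relRange hacc hnd hw' (Or.inr hα)) (by omega)
          have hBα : relRange Edge B' α ∈ H :=
            ih _ (relRange_mem_B hacc hB'ℬ (Or.inr hα)) hwα
          refine hH.2.2.2 _ hBα _ (relRange_mem_B hacc hDℬ (Or.inr hα)) ?_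
          exact relRange_mono (fun x hx => hBeq' ▸ (Or.inr hx : x ∈ C ∪ D)) α
        have hC : C ∈ H := hHsub C hCH
        have hCD : C ∪ D ∈ H := hH.2.2.1 C hC D hD
        rw [hBeq']
        exact hCD
    exact main n B hBℬ hw
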